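/- Let A and B be finite nonempty sets, let P and Q be probability mass functions on A × B with Q(a,b) > 0 for all (a,b), and suppose the conditional distributions of b given a agree, i.e., P(a,b)·Q(a) = Q(a,b)·P(a) for all a, b, where P(a) = ∑_b P(a,b), Q(a) = ∑_b Q(a,b) are the A-marginals and P(b) = ∑_a P(a,b), Q(b) = ∑_a Q(a,b) are the B-marginals. Then for every function f : ℝ → ℝ convex on [0,∞), ∑_{a∈A} Q(a)·f(P(a)/Q(a)) ≥ ∑_{b∈B} Q(b)·f(P(b)/Q(b)). -/

import Mathlib

/-- **Information loss.** If `P` and `Q` are strictly-positive-denominator pmfs on `A × B`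
whose conditional distributions of `b` given `a` agree, then for every `f` convex on
`[0, ∞)`, the f-divergence between the `A`-marginals dominates the f-divergence
between the `B`-marginals. -/
theorem information_loss {A B : Type*} [Fintype A] [Nonempty A] [Fintype B] [Nonempty B]
    (P Q : A × B → ℝ)
    (hPnonneg : ∀ x, 0 ≤ P x) (hPsum : ∑ x, P x = 1)
    (hQpos : ∀ x, 0 < Q x) (hQsum : ∑ x, Q x = 1)
    (hcond : ∀ a b, P (a, b) * (∑ b', Q (a, b')) = Q (a, b) * (∑ b', P (a, b')))
    (f : ℝ → ℝ) (hf : ConvexOn ℝ (Set.Ici (0 : ℝ)) f) :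
    ∑ a : A, (∑ b : B, Q (a, b)) * f ((∑ b : B, P (a, b)) / (∑ b : B, Q (a, b))) ≥
      ∑ b : B, (∑ a : A, Q (a, b)) * f ((∑ a : A, P (a, b)) / (∑ a : A, Q (a, b))) := by
  have hQApos : ∀ a : A, 0 < ∑ b, Q (a, b) :=
    fun a => Finset.sum_pos (fun b _ => hQpos _) Finset.univ_nonempty
  have hQBpos : ∀ b : B, 0 < ∑ a, Q (a, b) :=
    fun b => Finset.sum_pos (fun a _ => hQpos _) Finset.univ_nonempty
  have hPAnn : ∀ a : A, 0 ≤ ∑ b, P (a, b) :=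
    fun a => Finset.sum_nonneg fun b _ => hPnonneg _
  have key : ∀ a b, P (a, b) = Q (a, b) * ((∑ b', P (a, b')) / (∑ b', Q (a, b'))) := by
    intro a b
    rw [mul_div_assoc' , eq_div_iff (hQApos a).ne']
    exact hcond a b
  have hb : ∀ b : B, (∑ a, Q (a, b)) * f ((∑ a, P (a, b)) / (∑ a, Q (a, b))) ≤
      ∑ a, Q (a, b) * f ((∑ b', P (a, b')) / (∑ b', Q (a, b'))) := by
    intro b
    set S := ∑ a, Q (a, b) with hS
    have hSpos := hQBpos b
    have hw1 : ∑ a : A, Q (a, b) / S = 1 := by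
      rw [← Finset.sum_div]; exact div_self hSpos.ne'
    have hjensen := hf.map_sum_le (t := Finset.univ)
      (w := fun a => Q (a, b) / S)
      (p := fun a => (∑ b', P (a, b')) / (∑ b', Q (a, b')))
      (fun a _ => div_nonneg (hQpos _).le hSpos.le) hw1
      (fun a _ => div_nonneg (hPAnn a) (hQApos a).le)
    have hsum : ∑ a : A, (Q (a, b) / S) • ((∑ b', P (a, b')) / (∑ b', Q (a, b')))
        = (∑ a, P (a, b)) / S := by
      have h : ∀ a : A, (Q (a, b) / S) • ((∑ b', P (a, b')) / (∑ b', Q (a, b')))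
          = P (a, b) / S := by
        intro a
        rw [smul_eq_mul, key a b]
        field_simp
      simp_rw [h]
      rw [← Finset.sum_div]
    rw [hsum] at hjensen
    calc S * f ((∑ a, P (a, b)) / S)
        ≤ S * ∑ a : A, (Q (a, b) / S) • f ((∑ b', P (a, b')) / (∑ b', Q (a, b'))) :=
          mul_le_mul_of_nonneg_left hjensen hSpos.le
      _ = ∑ a, Q (a, b) * f ((∑ b', P (a, b')) / (∑ b', Q (a, b'))) := by
          rw [Finset.mul_sum]
          exact Finset.sum_congr rfl fun a _ => by
            rw [smul_eq_mul]; field_simp; rw [mul_assoc, mul_div_cancel_left₀ _ (show S ≠ 0 from hSpos.ne')]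
  calc ∑ b : B, (∑ a : A, Q (a, b)) * f ((∑ a : A, P (a, b)) / (∑ a : A, Q (a, b)))
      ≤ ∑ b : B, ∑ a : A, Q (a, b) * f ((∑ b', P (a, b')) / (∑ b', Q (a, b'))) :=
        Finset.sum_le_sum fun b _ => hb b
    _ = ∑ a : A, (∑ b : B, Q (a, b)) * f ((∑ b : B, P (a, b)) / (∑ b : B, Q (a, b))) := by
        rw [Finset.sum_comm]
        exact Finset.sum_congr rfl fun a _ => by rw [Finset.sum_mul]
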